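/- Let B be a division ring with center K (a field), and assume B is finite-dimensional as a K-vector space. Then the K-linear span of the set of all commutators {ab − ba : a, b ∈ B} is a proper K-subspace of B, i.e., it is not all of B. -/

import Mathlib

open Finset

section aux
variable {B : Type*} [DivisionRing B]

local notation "K" => Subring.center B

/-- Classical independence lemma: if `b i` are linearly independent over the center
and `∑ i, a i * x * b i = 0` for all `x`, then all `a i = 0`. -/
lemma aux_indep : ∀ (m : ℕ) (a b : Fin m → B), LinearIndependent K b →
    (∀ x : B, ∑ i, a i * x * b i = 0) → ∀ i, a i = 0 := by
  intro m
  induction m using Nat.strong_induction_on with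
  | _ m IH =>
  rcases m with _ | m
  · intro a b _ _ i; exact i.elim0
  intro a b hb hrel
  by_cases h0 : ∃ i₀, a i₀ = 0
  · -- remove a zero coefficient and use induction
    obtain ⟨i₀, hi₀⟩ := h0
    have hb' : LinearIndependent K (b ∘ i₀.succAbove) :=
      hb.comp _ (Fin.succAbove_right_injective)
    have hrel' : ∀ x : B, ∑ j, (a ∘ i₀.succAbove) j * x * (b ∘ i₀.succAbove) j = 0 := by
      intro x
      have := hrel x
      rw [Fin.sum_univ_succAbove (fun i => a i * x * b i) i₀, hi₀, zero_mul, zero_mul,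
        zero_add] at this
      exact this
    have key := IH m (Nat.lt_succ_self m) _ _ hb' hrel'
    intro i
    rcases eq_or_ne i i₀ with rfl | hne
    · exact hi₀
    · obtain ⟨j, rfl⟩ := Fin.exists_succAbove_eq hne
      exact key j
  · -- all coefficients nonzero: derive a contradiction
    exfalso
    push_neg at h0
    set u := (a 0)⁻¹ with hu
    set a' : Fin (m+1) → B := fun i => u * a i with ha'
    have ha'0 : a' 0 = 1 := inv_mul_cancel₀ (h0 0)
    have hrel2 : ∀ x : B, ∑ i, a' i * x * b i = 0 := by
      intro x
      have := hrel x
      calc ∑ i, a' i * x * b i = u * ∑ i, a i * x * b i := by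
            rw [Finset.mul_sum]; congr 1; ext i; rw [ha']; simp [mul_assoc]
        _ = 0 := by rw [this, mul_zero]
    -- commutator relation
    have hcomm : ∀ y x : B, ∑ i, (a' i * y - y * a' i) * x * b i = 0 := by
      intro y x
      have h1 := hrel2 (y * x)
      have h2 := hrel2 x
      calc ∑ i, (a' i * y - y * a' i) * x * b i
          = ∑ i, (a' i * (y * x) * b i - y * (a' i * x * b i)) := by
            congr 1; ext i; simp [sub_mul, mul_assoc]
        _ = (∑ i, a' i * (y * x) * b i) - y * ∑ i, a' i * x * b i := by
            rw [Finset.sum_sub_distrib, Finset.mul_sum]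
        _ = 0 := by rw [h1, h2, mul_zero, sub_zero]
    -- each a' i is central
    have hcentral : ∀ i, a' i ∈ Subring.center B := by
      intro i
      rw [Subring.mem_center_iff]
      intro y
      rw [eq_comm, ← sub_eq_zero]
      have hb' : LinearIndependent K (b ∘ Fin.succ) := hb.comp _ (Fin.succ_injective m)
      have hrel' : ∀ x : B,
          ∑ j, ((fun i => a' i * y - y * a' i) ∘ Fin.succ) j * x * (b ∘ Fin.succ) j = 0 := by
        intro x
        have := hcomm y x
        rw [Fin.sum_univ_succ (fun i => (a' i * y - y * a' i) * x * b i), ha'0,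
          one_mul, mul_one, sub_self, zero_mul, zero_mul, zero_add] at this
        exact this
      have key := IH m (Nat.lt_succ_self m) _ _ hb' hrel'
      rcases Fin.eq_zero_or_eq_succ i with rfl | ⟨j, rfl⟩
      · rw [ha'0, one_mul, mul_one, sub_self]
      · exact key j
    -- with x = 1 : ∑ (a' i) * b i = 0, contradict independence
    have h1 := hrel2 1
    simp only [mul_one] at h1
    have h1' : ∑ i, (⟨a' i, hcentral i⟩ : K) • b i = 0 := h1
    have hall := linearIndependent_iff'.mp hb Finset.univ (fun i => ⟨a' i, hcentral i⟩) h1'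
    have h2 : a' 0 = 0 := congrArg Subtype.val (hall 0 (Finset.mem_univ 0))
    rw [ha'0] at h2
    exact one_ne_zero h2


/-- The `K`-linear map `x ↦ a * x * c`. -/
def lr (a c : B) : B →ₗ[K] B where
  toFun x := a * x * c
  map_add' x y := by simp [mul_add, add_mul]
  map_smul' k x := by
    have hk := Subring.mem_center_iff.mp k.2
    show a * ((k : B) * x) * c = (k : B) * (a * x * c)
    simp only [← mul_assoc, hk a]

@[simp] lemma lr_apply (a c x : B) : lr a c x = a * x * c := rfl

/-- `c ↦ lr a c` as a linear map. -/
def lrL (a : B) : B →ₗ[K] (B →ₗ[K] B) where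
  toFun c := lr a c
  map_add' c d := by ext x; simp [mul_add]
  map_smul' k c := by
    ext x
    have hk := Subring.mem_center_iff.mp k.2
    show a * x * ((k : B) * c) = (k : B) * (a * x * c)
    rw [← mul_assoc, hk (a * x), mul_assoc]

lemma trace_lr_mul_comm (a x y : B) :
    LinearMap.trace K B (lr a (x * y)) = LinearMap.trace K B (lr a (y * x)) := by
  have h1 : lr a (x * y) = lr (1 : B) y * lr a x := by
    ext w; show a * w * (x * y) = 1 * (a * w * x) * y; simp only [one_mul, mul_assoc]
  have h2 : lr a (y * x) = lr a x * lr (1 : B) y := by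
    ext w; show a * w * (y * x) = a * (1 * w * y) * x
    simp only [one_mul, mul_assoc]
  rw [h1, h2, LinearMap.trace_mul_comm]
end aux

set_option maxHeartbeats 1000000 in
/-- Let `B` be a division ring with centre `K`, finite-dimensional over `K`.
Then the `K`-span of the set of commutators `a * b - b * a` is a proper
`K`-subspace of `B`. -/
theorem span_commutators_ne_top
    (B : Type*) [DivisionRing B]
    [FiniteDimensional (Subring.center B) B] :
    Submodule.span (Subring.center B) {x : B | ∃ a b : B, x = a * b - b * a} ≠ ⊤ := by
  intro htop
  set K := Subring.center B with hK
  -- Step 1: the trace vanishes on every `lr a c`.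
  have hφ : ∀ a c : B, LinearMap.trace K B (lr a c) = 0 := by
    intro a c
    have hker : Submodule.span K {x : B | ∃ p q : B, x = p * q - q * p} ≤
        LinearMap.ker ((LinearMap.trace K B).comp (lrL a)) := by
      rw [Submodule.span_le]
      rintro x ⟨p, q, rfl⟩
      simp only [SetLike.mem_coe, LinearMap.mem_ker, LinearMap.comp_apply, map_sub]
      rw [show lrL a (p * q) = lr a (p * q) from rfl, show lrL a (q * p) = lr a (q * p) from rfl,
        trace_lr_mul_comm a p q, sub_self]
    rw [htop, top_le_iff, LinearMap.ker_eq_top] at hker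
    exact congrFun (congrArg DFunLike.coe hker) c
  -- Step 2: the `lr (e i) (e j)` span all of `End K B`.
  set n := Module.finrank K B with hn
  have hpos : 0 < n := Module.finrank_pos
  let e := Module.finBasis K B
  have hLI : LinearIndependent K (fun p : Fin n × Fin n => lr (e p.1) (e p.2)) := by
    rw [Fintype.linearIndependent_iff]
    intro g hg p
    set aj : Fin n → B := fun j => ∑ i, (g (i, j) : B) * e i with haj
    have hrel : ∀ x : B, ∑ j, aj j * x * e j = 0 := by
      intro x
      have := congrFun (congrArg DFunLike.coe hg) x
      simp only [LinearMap.coe_sum, Finset.sum_apply, LinearMap.smul_apply, lr_apply,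
        LinearMap.zero_apply] at this
      calc ∑ j, aj j * x * e j = ∑ j, ∑ i, (g (i, j) : B) * e i * x * e j := by
            congr 1; ext j; rw [haj, Finset.sum_mul, Finset.sum_mul]
        _ = ∑ i, ∑ j, (g (i, j) : B) * (e i * x * e j) := by
            rw [Finset.sum_comm]; congr 1; ext i; congr 1; ext j; simp only [mul_assoc]
        _ = ∑ p : Fin n × Fin n, g p • (e p.1 * x * e p.2) := by
            rw [Fintype.sum_prod_type]; rfl
        _ = 0 := this
    have hz := aux_indep n aj e e.linearIndependent hrel p.2
    have : ∑ i, g (i, p.2) • e i = 0 := hz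
    have := Fintype.linearIndependent_iff.mp e.linearIndependent (fun i => g (i, p.2)) this p.1
    exact this
  have hcard : Fintype.card (Fin n × Fin n) = Module.finrank K (B →ₗ[K] B) := by
    simp [Module.finrank_linearMap]; rfl
  haveI : Nonempty (Fin n × Fin n) := ⟨(⟨0, hpos⟩, ⟨0, hpos⟩)⟩
  have hspan := hLI.span_eq_top_of_card_eq_finrank hcard
  -- Step 3: hence the trace vanishes identically.
  have htr : ∀ f : B →ₗ[K] B, LinearMap.trace K B f = 0 := by
    have hle : Submodule.span K (Set.range fun p : Fin n × Fin n => lr (e p.1) (e p.2)) ≤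
        LinearMap.ker (LinearMap.trace K B) := by
      rw [Submodule.span_le]
      rintro f ⟨p, rfl⟩
      exact hφ _ _
    rw [hspan, top_le_iff, LinearMap.ker_eq_top] at hle
    intro f
    exact congrFun (congrArg DFunLike.coe hle) f
  -- Step 4: but there is an endomorphism of trace 1.
  let i0 : Fin n := ⟨0, hpos⟩
  let f := Matrix.toLin e e (Matrix.single i0 i0 (1 : K))
  have : LinearMap.trace K B f = 1 := by
    rw [LinearMap.trace_eq_matrix_trace K e, LinearMap.toMatrix_toLin]
    exact Matrix.trace_single_eq_same i0 (1 : K)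
  rw [htr f] at this
  exact zero_ne_one this
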